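/- arXiv:2503.01562 — 2 statements merged into one kernel-verified Lean document; each statement's English description precedes it below -/
import Mathlib

section
/- The greedy algorithm for set cover, which at each step selects the set covering the largest number of still-uncovered elements, returns a cover whose cardinality is at most H_n · OPT, where n is the number of elements of the universe, OPT is the minimum cover size, and H_n = 1 + 1/2 + ... + 1/n is the n-th harmonic number. -/
/-- The greedy set-cover algorithm (each step picking a set of the family `F`
covering the most still-uncovered elements of the universe `U`) stops after `T` steps with
a cover, and `T ≤ H_n · OPT` where `n = |U|`, `H_n` is the `n`-th harmonic number and
`OPT` the minimum cover size (the bound holds against every cover `C`). -/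
theorem greedy_set_cover_harmonic_bound {α : Type*} [DecidableEq α]
    (U : Finset α) (F : Finset (Finset α))
    (hUcov : ∀ x ∈ U, ∃ S ∈ F, x ∈ S)
    (g : ℕ → Finset α) (hg : ∀ t, g t ∈ F)
    (hgreedy : ∀ t, ∀ S ∈ F,
      ((S ∩ U) \ (Finset.range t).biUnion g).card ≤
        ((g t ∩ U) \ (Finset.range t).biUnion g).card)
    (T : ℕ) (hT : U ⊆ (Finset.range T).biUnion g)
    (hTmin : ∀ t < T, ¬ U ⊆ (Finset.range t).biUnion g)
    (C : Finset (Finset α)) (hCF : C ⊆ F) (hC : ∀ x ∈ U, ∃ S ∈ C, x ∈ S) :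
    (T : ℝ) ≤ (∑ k ∈ Finset.Icc 1 U.card, (1 : ℝ) / k) * C.card := by
  classical
  set cov : ℕ → Finset α := fun t => (Finset.range t).biUnion g with hcovdef
  set u : ℕ → ℕ := fun t => (U \ cov t).card with hudef
  -- cov is monotone
  have hcovmono : ∀ t, cov t ⊆ cov (t + 1) := by
    intro t
    apply Finset.biUnion_subset_biUnion_of_subset_left
    exact Finset.range_subset_range.2 (Nat.le_succ t)
  have hcovsucc : ∀ t, cov (t + 1) = g t ∪ cov t := by
    intro t
    simp [hcovdef, Finset.range_add_one, Finset.biUnion_insert]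
  have humono : ∀ t, u (t + 1) ≤ u t := by
    intro t
    exact Finset.card_le_card (Finset.sdiff_subset_sdiff le_rfl (hcovmono t))
  -- positivity of u before termination
  have hupos : ∀ t < T, 0 < u t := by
    intro t ht
    have hne : (U \ cov t).Nonempty := by
      rw [Finset.nonempty_iff_ne_empty]
      intro h
      apply hTmin t ht
      intro x hx
      by_contra hxc
      have hmem : x ∈ U \ cov t := Finset.mem_sdiff.2 ⟨hx, hxc⟩
      simp [h] at hmem
    exact Finset.card_pos.2 hne
  -- the key combinatorial estimate
  have hkey : ∀ t < T, u t ≤ C.card * (u t - u (t + 1)) := by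
    intro t _
    set R : Finset α := U \ cov t with hRdef
    -- u t - u (t+1) = (R ∩ g t).card
    have hsd : U \ cov (t + 1) = R \ g t := by
      rw [hcovsucc t]
      ext x; simp [hRdef]; tauto
    have hdiff : u t - u (t + 1) = (R ∩ g t).card := by
      have h1 : (R ∩ g t).card + (R \ g t).card = R.card :=
        Finset.card_inter_add_card_sdiff R (g t)
      have h0 : u t = R.card := rfl
      have h2 : u (t + 1) = (R \ g t).card := by
        show (U \ cov (t + 1)).card = _
        rw [hsd]
      omega
    rw [hdiff]
    -- R is covered by C
    have hRsub : R ⊆ C.biUnion (fun S => S ∩ R) := by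
      intro x hx
      obtain ⟨S, hS, hxS⟩ := hC x (Finset.mem_sdiff.1 hx).1
      exact Finset.mem_biUnion.2 ⟨S, hS, Finset.mem_inter.2 ⟨hxS, hx⟩⟩
    have h1 : R.card ≤ ∑ S ∈ C, (S ∩ R).card :=
      le_trans (Finset.card_le_card hRsub) (Finset.card_biUnion_le)
    have h2 : ∀ S ∈ C, (S ∩ R).card ≤ (R ∩ g t).card := by
      intro S hS
      have hSR : S ∩ R = (S ∩ U) \ cov t := by
        ext x; simp [hRdef]; tauto
      have hgt : (g t ∩ U) \ cov t = R ∩ g t := by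
        ext x; simp [hRdef]; tauto
      rw [hSR, ← hgt]
      exact hgreedy t S (hCF hS)
    calc R.card ≤ ∑ S ∈ C, (S ∩ R).card := h1
      _ ≤ ∑ _S ∈ C, (R ∩ g t).card := Finset.sum_le_sum h2
      _ = C.card * (R ∩ g t).card := by rw [Finset.sum_const, smul_eq_mul]
  -- harmonic function
  set H : ℕ → ℝ := fun m => ∑ k ∈ Finset.Icc 1 m, (1 : ℝ) / k with hHdef
  have hHIoc : ∀ m, H m = ∑ k ∈ Finset.Ioc 0 m, (1 : ℝ) / k := by
    intro m
    show (∑ k ∈ Finset.Icc 1 m, (1 : ℝ) / k) = _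
    rw [show Finset.Icc 1 m = Finset.Ioc 0 m from by
      ext k; simp only [Finset.mem_Icc, Finset.mem_Ioc]; omega]
  have hHnonneg : ∀ m, 0 ≤ H m := by
    intro m
    apply Finset.sum_nonneg
    intro k _; positivity
  -- per-step bound
  have hstep : ∀ t < T, (1 : ℝ) ≤ C.card * (H (u t) - H (u (t + 1))) := by
    intro t ht
    have hle := humono t
    have hpos := hupos t ht
    have hsplit : H (u (t + 1)) + ∑ k ∈ Finset.Ioc (u (t + 1)) (u t), (1 : ℝ) / k
        = H (u t) := by
      rw [hHIoc, hHIoc]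
      exact Finset.sum_Ioc_consecutive _ (Nat.zero_le _) hle
    have hlower : ((u t - u (t + 1) : ℕ) : ℝ) * (1 / (u t : ℝ))
        ≤ ∑ k ∈ Finset.Ioc (u (t + 1)) (u t), (1 : ℝ) / k := by
      have : ∀ k ∈ Finset.Ioc (u (t + 1)) (u t), (1 : ℝ) / (u t : ℝ) ≤ 1 / k := by
        intro k hk
        have hk' := Finset.mem_Ioc.1 hk
        have hk0 : 0 < k := lt_of_le_of_lt (Nat.zero_le _) hk'.1
        apply one_div_le_one_div_of_le
        · exact_mod_cast hk0
        · exact_mod_cast hk'.2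
      calc ((u t - u (t + 1) : ℕ) : ℝ) * (1 / (u t : ℝ))
          = (Finset.Ioc (u (t + 1)) (u t)).card * (1 / (u t : ℝ)) := by
            rw [Nat.card_Ioc]
        _ = ∑ _k ∈ Finset.Ioc (u (t + 1)) (u t), (1 / (u t : ℝ)) := by
            rw [Finset.sum_const, nsmul_eq_mul]
        _ ≤ _ := Finset.sum_le_sum this
    have hCd : (u t : ℝ) ≤ (C.card : ℝ) * ((u t - u (t + 1) : ℕ) : ℝ) := by
      exact_mod_cast hkey t ht
    have hut : (0 : ℝ) < (u t : ℝ) := by exact_mod_cast hpos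
    have h1 : (1 : ℝ) ≤ (C.card : ℝ) * (((u t - u (t + 1) : ℕ) : ℝ) * (1 / (u t : ℝ))) := by
      rw [← mul_assoc, mul_one_div, le_div_iff₀ hut, one_mul]
      exact hCd
    have hdiff : H (u t) - H (u (t + 1)) = ∑ k ∈ Finset.Ioc (u (t + 1)) (u t), (1 : ℝ) / k := by
      linarith [hsplit]
    rw [hdiff]
    calc (1 : ℝ) ≤ (C.card : ℝ) * (((u t - u (t + 1) : ℕ) : ℝ) * (1 / (u t : ℝ))) := h1
      _ ≤ (C.card : ℝ) * ∑ k ∈ Finset.Ioc (u (t + 1)) (u t), (1 : ℝ) / k := by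
          apply mul_le_mul_of_nonneg_left hlower (by positivity)
  -- sum up
  have hTsum : (T : ℝ) ≤ (C.card : ℝ) * (H (u 0) - H (u T)) := by
    have := Finset.sum_le_sum (f := fun _ : ℕ => (1 : ℝ))
      (g := fun t => (C.card : ℝ) * (H (u t) - H (u (t + 1))))
      (s := Finset.range T) (fun t ht => hstep t (Finset.mem_range.1 ht))
    have htel : ∑ t ∈ Finset.range T, (H (u t) - H (u (t + 1))) = H (u 0) - H (u T) :=
      Finset.sum_range_sub' (fun t => H (u t)) T
    calc (T : ℝ) = ∑ _t ∈ Finset.range T, (1 : ℝ) := by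
          rw [Finset.sum_const, Finset.card_range, nsmul_eq_mul, mul_one]
      _ ≤ ∑ t ∈ Finset.range T, (C.card : ℝ) * (H (u t) - H (u (t + 1))) := this
      _ = (C.card : ℝ) * ∑ t ∈ Finset.range T, (H (u t) - H (u (t + 1))) := by
          rw [Finset.mul_sum]
      _ = (C.card : ℝ) * (H (u 0) - H (u T)) := by rw [htel]
  have hu0 : u 0 = U.card := by simp [hudef, hcovdef]
  calc (T : ℝ) ≤ (C.card : ℝ) * (H (u 0) - H (u T)) := hTsum
    _ ≤ (C.card : ℝ) * H (u 0) := by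
        apply mul_le_mul_of_nonneg_left _ (by positivity)
        linarith [hHnonneg (u T)]
    _ = H U.card * C.card := by rw [hu0, mul_comm]
end

section
/- In the greedy set cover algorithm, each element of the universe that is the j-th newly covered element (counting backwards, i.e., when j elements remain uncovered including it) can be assigned a cost at most OPT/j, and summing these costs shows the greedy cover size is at most OPT · H_n. -/
/-- In greedy set cover, there is a cost assignment on the universe in which
the `j`-th newly covered element counted backwards (i.e. with `j` elements still uncovered
including it) receives cost at most `OPT / j`; the costs sum to the number of greedy steps,
hence the greedy cover size is at most `OPT · H_n`. -/
theorem greedy_set_cover_charging {α : Type*} [DecidableEq α]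
    (U : Finset α) (F : Finset (Finset α))
    (hUcov : ∀ x ∈ U, ∃ S ∈ F, x ∈ S)
    (g : ℕ → Finset α) (hg : ∀ t, g t ∈ F)
    (hgreedy : ∀ t, ∀ S ∈ F,
      ((S ∩ U) \ (Finset.range t).biUnion g).card ≤
        ((g t ∩ U) \ (Finset.range t).biUnion g).card)
    (T : ℕ) (hT : U ⊆ (Finset.range T).biUnion g)
    (hTmin : ∀ t < T, ¬ U ⊆ (Finset.range t).biUnion g)
    (C : Finset (Finset α)) (hCF : C ⊆ F) (hC : ∀ x ∈ U, ∃ S ∈ C, x ∈ S) :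
    ∃ (cost : α → ℝ) (j : α → ℕ),
      (T : ℝ) ≤ ∑ x ∈ U, cost x ∧
      Set.InjOn j ↑U ∧
      (∀ x ∈ U, 1 ≤ j x ∧ j x ≤ U.card ∧ cost x ≤ (C.card : ℝ) / j x) ∧
      (T : ℝ) ≤ (C.card : ℝ) * ∑ k ∈ Finset.Icc 1 U.card, (1 : ℝ) / k := by
  classical
  set cov : ℕ → Finset α := fun t => (Finset.range t).biUnion g with hcov
  set N : ℕ → Finset α := fun t => (g t ∩ U) \ cov t with hN
  have hgreedy' : ∀ t, ∀ S ∈ F, ((S ∩ U) \ cov t).card ≤ (N t).card := by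
    intro t S hS
    simpa only [hcov, hN] using hgreedy t S hS
  -- every element of U is in some g t
  have hex : ∀ x ∈ U, ∃ t, x ∈ g t := by
    intro x hx
    obtain ⟨t, -, ht⟩ := Finset.mem_biUnion.mp (hT hx)
    exact ⟨t, ht⟩
  set step : α → ℕ := fun x => if h : ∃ t, x ∈ g t then Nat.find h else 0 with hstepdef
  have hstep_mem : ∀ x ∈ U, x ∈ g (step x) := by
    intro x hx
    have h := hex x hx
    simp only [hstepdef, dif_pos h]
    exact Nat.find_spec h
  have hstep_min : ∀ x ∈ U, ∀ t, t < step x → x ∉ g t := by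
    intro x hx t ht
    have h := hex x hx
    simp only [hstepdef, dif_pos h] at ht
    exact Nat.find_min h ht
  have hstep_le : ∀ x ∈ U, ∀ t, x ∈ g t → step x ≤ t := by
    intro x hx t ht
    have h := hex x hx
    simp only [hstepdef, dif_pos h]
    exact Nat.find_le ht
  have hxN : ∀ x ∈ U, x ∈ N (step x) := by
    intro x hx
    simp only [hN, hcov, Finset.mem_sdiff, Finset.mem_inter, Finset.mem_biUnion,
      Finset.mem_range]
    refine ⟨⟨hstep_mem x hx, hx⟩, ?_⟩
    rintro ⟨t, ht, hxt⟩
    exact hstep_min x hx t ht hxt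
  have hNU : ∀ t, ∀ x ∈ N t, x ∈ U := by
    intro t x hxt
    simp only [hN, Finset.mem_sdiff, Finset.mem_inter] at hxt
    exact hxt.1.2
  have hNstep : ∀ t, ∀ x ∈ N t, step x = t := by
    intro t x hxt
    have hxU := hNU t x hxt
    simp only [hN, hcov, Finset.mem_sdiff, Finset.mem_inter, Finset.mem_biUnion,
      Finset.mem_range] at hxt
    refine le_antisymm (hstep_le x hxU t hxt.1.1) ?_
    by_contra hlt
    push_neg at hlt
    exact hxt.2 ⟨step x, hlt, hstep_mem x hxU⟩
  have hstep_lt : ∀ x ∈ U, step x < T := by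
    intro x hx
    obtain ⟨t, ht, hxt⟩ := Finset.mem_biUnion.mp (hT hx)
    exact lt_of_le_of_lt (hstep_le x hx t hxt) (Finset.mem_range.mp ht)
  -- the partition card identity
  have hcovsucc : ∀ t, cov (t + 1) = cov t ∪ g t := by
    intro t
    ext y
    simp only [hcov, Finset.mem_biUnion, Finset.mem_range, Finset.mem_union,
      Nat.lt_succ_iff_lt_or_eq]
    constructor
    · rintro ⟨i, hi | rfl, hy⟩
      · exact Or.inl ⟨i, hi, hy⟩
      · exact Or.inr hy
    · rintro (⟨i, hi, hy⟩ | hy)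
      · exact ⟨i, Or.inl hi, hy⟩
      · exact ⟨t, Or.inr rfl, hy⟩
  have hcard : ∀ t, (U \ cov t).card = (U \ cov (t + 1)).card + (N t).card := by
    intro t
    have hunion : (U \ cov (t + 1)) ∪ N t = U \ cov t := by
      ext y
      simp only [hcovsucc t, hN, Finset.mem_union, Finset.mem_sdiff, Finset.mem_inter]
      tauto
    have hdisj : Disjoint (U \ cov (t + 1)) (N t) := by
      rw [Finset.disjoint_left]
      intro a ha ha'
      rw [hcovsucc t, Finset.mem_sdiff, Finset.mem_union] at ha
      simp only [hN, Finset.mem_sdiff, Finset.mem_inter] at ha'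
      exact ha.2 (Or.inr ha'.1.1)
    rw [← hunion, Finset.card_union_of_disjoint hdisj]
  have hmono : ∀ s t : ℕ, s ≤ t → (U \ cov t).card ≤ (U \ cov s).card := by
    intro s t hst
    apply Finset.card_le_card
    apply Finset.sdiff_subset_sdiff le_rfl
    simp only [hcov]
    exact Finset.biUnion_subset_biUnion_of_subset_left g (Finset.range_subset_range.mpr hst)
  -- rank and j
  set rank : α → ℕ := fun x =>
    if h : x ∈ N (step x) then ((N (step x)).equivFin ⟨x, h⟩ : Fin _).val else 0 with hrankdef
  set j : α → ℕ := fun x => (U \ cov (step x + 1)).card + rank x + 1 with hjdef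
  have hrank_lt : ∀ x ∈ U, rank x < (N (step x)).card := by
    intro x hx
    simp only [hrankdef, dif_pos (hxN x hx)]
    exact ((N (step x)).equivFin ⟨x, hxN x hx⟩).isLt
  have hj_le : ∀ x ∈ U, j x ≤ (U \ cov (step x)).card := by
    intro x hx
    have h1 := hrank_lt x hx
    have h2 := hcard (step x)
    simp only [hjdef]
    omega
  have hrank_eq : ∀ (t : ℕ) (x : α) (hx' : x ∈ N t), step x = t →
      rank x = (((N t).equivFin ⟨x, hx'⟩ : Fin _) : ℕ) := by
    intro t x hx' hst
    subst hst
    simp only [hrankdef, dif_pos hx']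
  -- injectivity
  have hinj : Set.InjOn j ↑U := by
    intro x hx y hy hxy
    rw [Finset.mem_coe] at hx hy
    rcases lt_trichotomy (step x) (step y) with h | h | h
    · exfalso
      have h1 : j y ≤ (U \ cov (step y)).card := hj_le y hy
      have h2 : (U \ cov (step y)).card ≤ (U \ cov (step x + 1)).card := hmono _ _ h
      have h3 : (U \ cov (step x + 1)).card < j x := by simp only [hjdef]; omega
      omega
    · have hxm : x ∈ N (step y) := h ▸ hxN x hx
      have hym : y ∈ N (step y) := hxN y hy
      have hrx := hrank_eq (step y) x hxm h
      have hry := hrank_eq (step y) y hym rfl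
      have hrk : rank x = rank y := by
        simp only [hjdef] at hxy
        rw [h] at hxy
        omega
      rw [hrx, hry] at hrk
      have := (N (step y)).equivFin.injective (Fin.ext hrk)
      exact congrArg Subtype.val this
    · exfalso
      have h1 : j x ≤ (U \ cov (step x)).card := hj_le x hx
      have h2 : (U \ cov (step x)).card ≤ (U \ cov (step y + 1)).card := hmono _ _ h
      have h3 : (U \ cov (step y + 1)).card < j y := by simp only [hjdef]; omega
      omega
  -- cost
  set cost : α → ℝ := fun x => 1 / ((N (step x)).card : ℝ) with hcostdef
  have hNne : ∀ t < T, 0 < (N t).card := by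
    intro t ht
    obtain ⟨x, hxU, hxnc⟩ := Finset.not_subset.mp (hTmin t ht)
    obtain ⟨S, hS, hxS⟩ := hUcov x hxU
    have h1 : x ∈ (S ∩ U) \ cov t := by
      simp only [hcov, Finset.mem_sdiff, Finset.mem_inter]
      exact ⟨⟨hxS, hxU⟩, hxnc⟩
    have h2 := hgreedy' t S hS
    have h3 : 0 < ((S ∩ U) \ cov t).card := Finset.card_pos.mpr ⟨x, h1⟩
    omega
  have hUeq : U = (Finset.range T).biUnion N := by
    ext x
    constructor
    · intro hx
      exact Finset.mem_biUnion.mpr ⟨step x, Finset.mem_range.mpr (hstep_lt x hx), hxN x hx⟩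
    · intro hx
      obtain ⟨t, -, h⟩ := Finset.mem_biUnion.mp hx
      exact hNU t x h
  have hdisjN : (↑(Finset.range T) : Set ℕ).PairwiseDisjoint N := by
    intro s hs t ht hst
    rw [Function.onFun, Finset.disjoint_left]
    intro a ha ha'
    exact hst ((hNstep s a ha).symm.trans (hNstep t a ha'))
  have hsum : ∑ x ∈ U, cost x = T := by
    rw [hUeq, Finset.sum_biUnion hdisjN]
    have heach : ∀ t ∈ Finset.range T, ∑ x ∈ N t, cost x = 1 := by
      intro t ht
      have hct : ∀ x ∈ N t, cost x = 1 / ((N t).card : ℝ) := by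
        intro x hxn
        simp only [hcostdef, hNstep t x hxn]
      rw [Finset.sum_congr rfl hct, Finset.sum_const, nsmul_eq_mul]
      have hpos := hNne t (Finset.mem_range.mp ht)
      rw [mul_one_div_cancel (by exact_mod_cast hpos.ne')]
    rw [Finset.sum_congr rfl heach, Finset.sum_const, nsmul_eq_mul, mul_one, Finset.card_range]
  -- pigeonhole with optimal cover
  have hkey : ∀ t < T, (U \ cov t).card ≤ C.card * (N t).card := by
    intro t ht
    have hsub : U \ cov t ⊆ C.biUnion (fun S => (S ∩ U) \ cov t) := by
      intro x hx
      obtain ⟨hxU, hxc⟩ := Finset.mem_sdiff.mp hx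
      obtain ⟨S, hS, hxS⟩ := hC x hxU
      exact Finset.mem_biUnion.mpr
        ⟨S, hS, Finset.mem_sdiff.mpr ⟨Finset.mem_inter.mpr ⟨hxS, hxU⟩, hxc⟩⟩
    calc (U \ cov t).card ≤ (C.biUnion fun S => (S ∩ U) \ cov t).card :=
          Finset.card_le_card hsub
      _ ≤ ∑ S ∈ C, ((S ∩ U) \ cov t).card := Finset.card_biUnion_le
      _ ≤ ∑ S ∈ C, (N t).card := Finset.sum_le_sum fun S hS => hgreedy' t S (hCF hS)
      _ = C.card * (N t).card := by rw [Finset.sum_const, smul_eq_mul]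
  have hj1 : ∀ x ∈ U, 1 ≤ j x := by
    intro x hx
    simp only [hjdef]
    omega
  have hjU : ∀ x ∈ U, j x ≤ U.card := by
    intro x hx
    exact le_trans (hj_le x hx) (Finset.card_le_card (Finset.sdiff_subset))
  have hcost_le : ∀ x ∈ U, cost x ≤ (C.card : ℝ) / j x := by
    intro x hx
    have hk : 0 < (N (step x)).card := hNne _ (hstep_lt x hx)
    have hjle : j x ≤ C.card * (N (step x)).card :=
      le_trans (hj_le x hx) (hkey _ (hstep_lt x hx))
    have hkR : (0 : ℝ) < ((N (step x)).card : ℝ) := by exact_mod_cast hk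
    have hjR : (0 : ℝ) < (j x : ℝ) := by exact_mod_cast hj1 x hx
    simp only [hcostdef]
    rw [div_le_div_iff₀ hkR hjR, one_mul]
    exact_mod_cast hjle
  refine ⟨cost, j, ?_, hinj, fun x hx => ⟨hj1 x hx, hjU x hx, hcost_le x hx⟩, ?_⟩
  · rw [hsum]
  · have himg : U.image j ⊆ Finset.Icc 1 U.card := by
      intro k hk
      obtain ⟨x, hx, rfl⟩ := Finset.mem_image.mp hk
      exact Finset.mem_Icc.mpr ⟨hj1 x hx, hjU x hx⟩
    calc (T : ℝ) = ∑ x ∈ U, cost x := hsum.symm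
      _ ≤ ∑ x ∈ U, (C.card : ℝ) / j x := Finset.sum_le_sum fun x hx => hcost_le x hx
      _ = (C.card : ℝ) * ∑ x ∈ U, 1 / (j x : ℝ) := by
          rw [Finset.mul_sum]
          exact Finset.sum_congr rfl fun x _ => by ring
      _ = (C.card : ℝ) * ∑ k ∈ U.image j, 1 / (k : ℝ) := by
          rw [Finset.sum_image (fun x hx y hy hxy => hinj hx hy hxy)]
      _ ≤ (C.card : ℝ) * ∑ k ∈ Finset.Icc 1 U.card, (1 : ℝ) / k := by
          apply mul_le_mul_of_nonneg_left _ (Nat.cast_nonneg _)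
          apply Finset.sum_le_sum_of_subset_of_nonneg himg
          intro k _ _
          positivity
end
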